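/- For any real r with 0 ≤ r ≤ 1 and positive integer n, let M be the unique integer satisfying (n+1)r - 1 ≤ M < (n+1)r, and define P(n) = r^M (1-r)^(n-M) · C(n, M). Then P(n+1) ≤ P(n); i.e., the maximal probability of a binomial(n, r) distribution is non-increasing in the number of trials n. -/

import Mathlib

/-- The maximal probability (mode mass) of a binomial(n, r) distribution is
non-increasing in the number of trials `n`. -/
theorem binomial_mode_prob_antitone
    (r : ℝ) (hr0 : 0 ≤ r) (hr1 : r ≤ 1) (n : ℕ) (hn : 0 < n)
    (M M' : ℕ)
    (hM1 : ((n : ℝ) + 1) * r - 1 ≤ M) (hM2 : (M : ℝ) < ((n : ℝ) + 1) * r)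
    (hM'1 : ((n : ℝ) + 2) * r - 1 ≤ M') (hM'2 : (M' : ℝ) < ((n : ℝ) + 2) * r) :
    r ^ M' * (1 - r) ^ (n + 1 - M') * ((n + 1).choose M')
      ≤ r ^ M * (1 - r) ^ (n - M) * (n.choose M) := by
  have h1r : (0:ℝ) ≤ 1 - r := by linarith
  set f : ℕ → ℝ := fun k => r ^ k * (1 - r) ^ (n - k) * (n.choose k) with hf
  have hfnn : ∀ k, 0 ≤ f k := by
    intro k
    have : (0:ℝ) ≤ (n.choose k : ℝ) := Nat.cast_nonneg _
    positivity
  have hMn : M ≤ n := by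
    have h1 : ((n:ℝ) + 1) * r ≤ (n:ℝ) + 1 := by nlinarith [(Nat.cast_nonneg n : (0:ℝ) ≤ (n:ℝ))]
    have h2 : (M:ℝ) < (n:ℝ) + 1 := lt_of_lt_of_le hM2 h1
    have : M < n + 1 := by exact_mod_cast h2
    omega
  -- key ratio identity
  have hid : ∀ k, k ≤ n → (1 - r) * ((k:ℝ)+1) * f (k+1) = r * ((n:ℝ) - k) * f k := by
    intro k hk
    rcases eq_or_lt_of_le hk with rfl | hk
    · simp [hf, Nat.choose_succ_self]
    · obtain ⟨m, rfl⟩ : ∃ m, n = k + 1 + m := ⟨n - (k+1), by omega⟩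
      have hch : ((k+1+m).choose (k + 1) : ℝ) * ((k:ℝ) + 1)
          = ((k+1+m).choose k : ℝ) * ((m:ℝ) + 1) := by
        have h := Nat.choose_succ_right_eq (k+1+m) k
        have h2 : k + 1 + m - k = m + 1 := by omega
        rw [h2] at h
        exact_mod_cast congrArg (Nat.cast (R := ℝ)) h
      have h3 : k + 1 + m - (k+1) = m := by omega
      have h4 : k + 1 + m - k = m + 1 := by omega
      simp only [hf, h3, h4]
      push_cast
      linear_combination (r^(k+1) * (1-r)^(m+1)) * hch
  have step_up : ∀ k, k < M → f k ≤ f (k+1) := by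
    intro k hk
    have hkn : k < n := lt_of_lt_of_le hk hMn
    have hid' := hid k hkn.le
    have hkM : (k:ℝ) + 1 ≤ M := by exact_mod_cast hk
    have hcoef : (1-r) * ((k:ℝ)+1) ≤ r * ((n:ℝ)-k) := by nlinarith
    rcases lt_or_eq_of_le hr1 with h | h
    · have hpos : 0 < (1-r) * ((k:ℝ)+1) := by
        have : (0:ℝ) < 1 - r := by linarith
        positivity
      nlinarith [hid', hpos, mul_nonneg (sub_nonneg.2 hcoef) (hfnn k), hfnn k,
        hfnn (k+1)]
    · -- r = 1
      have hnk : (0:ℝ) < (n:ℝ) - k := by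
        have : (k:ℝ) < n := by exact_mod_cast hkn
        linarith
      have hfk : f k = 0 := by
        have h0 : r * ((n:ℝ) - k) * f k = 0 := by rw [← hid', ← h]; ring
        have : f k = 0 := by
          rcases mul_eq_zero.1 h0 with h1 | h1
          · exfalso; rcases mul_eq_zero.1 h1 with h2 | h2 <;> nlinarith
          · exact h1
        exact this
      rw [hfk]; exact hfnn _
  have step_down : ∀ k, M ≤ k → f (k+1) ≤ f k := by
    intro k hk
    rcases lt_or_ge k n with hkn | hkn
    · have hid' := hid k hkn.le
      have hMk : (M:ℝ) ≤ k := by exact_mod_cast hk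
      have hcoef : r * ((n:ℝ)-k) ≤ (1-r) * ((k:ℝ)+1) := by nlinarith
      have hrlt : r < 1 := by
        rcases lt_or_eq_of_le hr1 with h | h
        · exact h
        · exfalso
          subst h
          have hkn' : (k:ℝ) < n := by exact_mod_cast hkn
          linarith
      have hpos : 0 < (1-r) * ((k:ℝ)+1) := by
        have : (0:ℝ) < 1 - r := by linarith
        positivity
      nlinarith [hid', hpos, mul_nonneg (sub_nonneg.2 hcoef) (hfnn k), hfnn k,
        hfnn (k+1)]
    · have : n < k + 1 := by omega
      simp [hf, Nat.choose_eq_zero_of_lt this, hfnn k]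
      exact hfnn k
  -- f attains max at M
  have hup : ∀ d k, k + d = M → f k ≤ f M := by
    intro d
    induction d with
    | zero => intro k h; simp at h; rw [h]
    | succ d ih =>
      intro k h
      have hkM : k < M := by omega
      exact le_trans (step_up k hkM) (ih (k+1) (by omega))
  have hdown : ∀ d, f (M + d) ≤ f M := by
    intro d
    induction d with
    | zero => simp
    | succ d ih =>
      have : f (M + d + 1) ≤ f (M + d) := step_down (M + d) (by omega)
      calc f (M + (d+1)) = f (M + d + 1) := by ring_nf
        _ ≤ f (M + d) := this
        _ ≤ f M := ih
  have fmax : ∀ k, f k ≤ f M := by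
    intro k
    rcases le_or_gt k M with h | h
    · exact hup (M - k) k (by omega)
    · have := hdown (k - M)
      have hk : M + (k - M) = k := by omega
      rwa [hk] at this
  -- now bound the (n+1)-mode mass
  have hM'n : M' ≤ n + 1 := by
    have h1 : ((n:ℝ) + 2) * r ≤ (n:ℝ) + 2 := by nlinarith [(Nat.cast_nonneg n : (0:ℝ) ≤ (n:ℝ))]
    have h2 : (M':ℝ) < (n:ℝ) + 2 := lt_of_lt_of_le hM'2 h1
    have : M' < n + 2 := by exact_mod_cast h2
    omega
  rcases M' with _ | k
  · -- M' = 0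
    have h0 : r ^ 0 * (1-r) ^ (n + 1 - 0) * ((n+1).choose 0 : ℝ) = (1-r) * f 0 := by
      simp [hf]
      ring
    show r ^ 0 * (1-r) ^ (n + 1 - 0) * ((n+1).choose 0 : ℝ) ≤ f M
    rw [h0]
    calc (1-r) * f 0 ≤ 1 * f 0 := by
          apply mul_le_mul_of_nonneg_right (by linarith) (hfnn 0)
      _ = f 0 := one_mul _
      _ ≤ f M := fmax 0
  · -- M' = k+1
    have hkn : k ≤ n := by omega
    have key : r ^ (k+1) * (1-r) ^ (n + 1 - (k+1)) * ((n+1).choose (k+1) : ℝ)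
        = r * f k + (1-r) * f (k+1) := by
      have hsucc : ((n+1).choose (k+1) : ℝ) = (n.choose k : ℝ) + (n.choose (k+1) : ℝ) := by
        exact_mod_cast congrArg (Nat.cast (R := ℝ)) (Nat.choose_succ_succ n k)
      rcases lt_or_eq_of_le hkn with hlt | rfl
      · obtain ⟨m, rfl⟩ : ∃ m, n = k + 1 + m := ⟨n - (k+1), by omega⟩
        have h3 : k + 1 + m - (k+1) = m := by omega
        have h4 : k + 1 + m - k = m + 1 := by omega
        have h5 : k + 1 + m + 1 - (k+1) = m + 1 := by omega
        simp only [hf, h3, h4, h5, hsucc]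
        ring
      · have h3 : k + 1 - (k+1) = 0 := by omega
        have h4 : k - k = 0 := by omega
        simp only [hf, h3, h4, hsucc, Nat.choose_succ_self, Nat.choose_self]
        push_cast
        ring
    show r ^ (k+1) * (1-r) ^ (n + 1 - (k+1)) * ((n+1).choose (k+1) : ℝ) ≤ f M
    rw [key]
    calc r * f k + (1-r) * f (k+1)
        ≤ r * f M + (1-r) * f M := by
          gcongr <;> [exact fmax k; exact fmax (k+1)]
      _ = f M := by ring
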